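/- Let n ∈ ℕ and 1 ≤ s ≤ m_n − 1. Then for every x ∈ G_m, s·M_n·K_{s·M_n}(x) = (Σ_{l=0}^{s−1} Σ_{i=0}^{l−1} r_n(x)^i)·M_n·D_{M_n}(x) + (Σ_{l=0}^{s−1} r_n(x)^l)·M_n·K_{M_n}(x). -/

import Mathlib

open MeasureTheory Complex Filter Finset Topology ENNReal NNReal Asymptotics

noncomputable section

namespace Vilenkin

/-- Discrete topology on each cyclic group. -/
instance (n : ℕ) : TopologicalSpace (ZMod n) := ⊥

instance (n : ℕ) : DiscreteTopology (ZMod n) := ⟨rfl⟩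

/-- Discrete measurable structure on each cyclic group. -/
instance (n : ℕ) : MeasurableSpace (ZMod n) := ⊤

instance (n : ℕ) : BorelSpace (ZMod n) := ⟨borel_eq_top_of_discrete.symm⟩

instance (n : ℕ) : IsTopologicalAddGroup (ZMod n) :=
  { continuous_add := continuous_of_discreteTopology
    continuous_neg := continuous_of_discreteTopology }

variable (m : ℕ → ℕ)

/-- The Vilenkin group: the product of the cyclic groups `ZMod (m k)`. -/
abbrev G := ∀ k : ℕ, ZMod (m k)

/-- The generalized powers `M_0 = 1`, `M_{k+1} = m_k M_k`. -/
def M : ℕ → ℕ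
  | 0 => 1
  | k + 1 => m k * M k

/-- The `k`-th digit of `n` in the generalized number system based on `m`. -/
def digit (n k : ℕ) : ℕ := n / M m k % m k

/-- The normalized Haar (product) probability measure on the bounded Vilenkin group. -/
def haarM (hm : ∀ k, 2 ≤ m k) : Measure (G m) :=
  haveI : ∀ k, NeZero (m k) := fun k => ⟨by have := hm k; omega⟩
  haveI : ∀ k, CompactSpace (ZMod (m k)) := fun k => Finite.compactSpace
  Measure.addHaarMeasure (⊤ : TopologicalSpace.PositiveCompacts (G m))

/-- The generalized Rademacher functions. -/
def rad (k : ℕ) (x : G m) : ℂ :=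
  Complex.exp (2 * Real.pi * Complex.I * ((x k).val : ℂ) / (m k : ℂ))

/-- The Vilenkin system. -/
def psi (n : ℕ) (x : G m) : ℂ :=
  ∏ k ∈ Finset.range (n + 1), rad m k x ^ digit m n k

/-- The Dirichlet kernels. -/
def Dker (n : ℕ) (x : G m) : ℂ := ∑ k ∈ Finset.range n, psi m k x

/-- The Fejér kernels. -/
def Kker (n : ℕ) (x : G m) : ℂ := (n : ℂ)⁻¹ * ∑ k ∈ Finset.range n, Dker m k x

/-- `Q_n = q_0 + ⋯ + q_{n-1}`. -/
def Q (q : ℕ → ℝ) (n : ℕ) : ℝ := ∑ k ∈ Finset.range n, q k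

/-- The Nörlund kernels. -/
def Fker (q : ℕ → ℝ) (n : ℕ) (x : G m) : ℂ :=
  (Q q n : ℂ)⁻¹ * ∑ k ∈ Finset.Icc 1 n, (q (n - k) : ℂ) * Dker m k x

/-- The `T`-mean kernels. -/
def Tker (q : ℕ → ℝ) (n : ℕ) (x : G m) : ℂ :=
  (Q q n : ℂ)⁻¹ * ∑ k ∈ Finset.Icc 1 n, (q k : ℂ) * Dker m k x

/-- Vilenkin-Fourier coefficients. -/
def fourierCoeff (hm : ∀ k, 2 ≤ m k) (f : G m → ℂ) (n : ℕ) : ℂ :=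
  ∫ x, f x * (starRingEnd ℂ) (psi m n x) ∂(haarM m hm)

/-- Partial sums of the Vilenkin-Fourier series. -/
def S (hm : ∀ k, 2 ≤ m k) (f : G m → ℂ) (n : ℕ) (x : G m) : ℂ :=
  ∑ k ∈ Finset.range n, fourierCoeff m hm f k * psi m k x

/-- The Nörlund means. -/
def t (hm : ∀ k, 2 ≤ m k) (q : ℕ → ℝ) (n : ℕ) (f : G m → ℂ) (x : G m) : ℂ :=
  (Q q n : ℂ)⁻¹ * ∑ k ∈ Finset.Icc 1 n, (q (n - k) : ℂ) * S m hm f k x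

/-- The Vilenkin interval `I_n(x)`. -/
def cyl (n : ℕ) (x : G m) : Set (G m) := {y | ∀ j < n, y j = x j}

/-- The largest index `j` such that the digit `n_j` is nonzero (for `n ≥ 1`). -/
def ord (n : ℕ) : ℕ := Nat.findGreatest (fun j => digit m n j ≠ 0) n

/-- The element of `G_m` having `r` at the `s`-th coordinate and `0` elsewhere. -/
def spike (s r : ℕ) : G m := fun k => if k = s then (r : ZMod (m k)) else 0

/-- The operator `W_A` of Goginava and Gogoladze. -/
def W (hm : ∀ k, 2 ≤ m k) (f : G m → ℂ) (A : ℕ) (x : G m) : ℝ :=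
  ∑ s ∈ Finset.range A, (M m s : ℝ) *
    ∑ r ∈ Finset.Icc 1 (m s - 1),
      ∫ u in cyl m A (x - spike m s r), ‖f u - f x‖ ∂(haarM m hm)

/-- `x` is a Vilenkin–Lebesgue point of `f`. -/
def VilenkinLebesguePoint (hm : ∀ k, 2 ≤ m k) (f : G m → ℂ) (x : G m) : Prop :=
  Tendsto (fun A => W m hm f A x) atTop (𝓝 0)

/-- `x` is a Lebesgue point of `f`. -/
def LebesguePoint (hm : ∀ k, 2 ≤ m k) (f : G m → ℂ) (x : G m) : Prop :=
  Tendsto (fun n => (M m n : ℂ) * ∫ u in cyl m n x, f u ∂(haarM m hm)) atTop (𝓝 (f x))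

lemma M_pos (hm : ∀ k, 2 ≤ m k) (k : ℕ) : 0 < M m k := by
  induction k with
  | zero => simp [M]
  | succ k ih => have := hm k; simpa [M] using Nat.mul_pos (by omega) ih

lemma lt_M (hm : ∀ k, 2 ≤ m k) (k : ℕ) : k < M m k := by
  induction k with
  | zero => simp [M]
  | succ k ih =>
    have := hm k
    have : 2 * M m k ≤ m k * M m k := Nat.mul_le_mul_right _ this
    simp only [M]; omega

lemma M_dvd (k : ℕ) : ∀ n, k ≤ n → M m k ∣ M m n := by
  intro n hn
  induction n with
  | zero => simpa using Nat.le_zero.mp hn ▸ dvd_refl _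
  | succ n ih =>
    rcases Nat.eq_or_lt_of_le hn with h | h
    · exact h ▸ dvd_refl _
    · exact Dvd.dvd.mul_left (ih (by omega)) _

lemma digit_zero_of_lt {N k : ℕ} (h : N < M m k) : digit m N k = 0 := by
  simp [digit, Nat.div_eq_of_lt h]

lemma digit_mul_add_lt (hm : ∀ k, 2 ≤ m k) {n k : ℕ} (hk : k < n) (l j : ℕ) :
    digit m (l * M m n + j) k = digit m j k := by
  obtain ⟨c, hc⟩ := M_dvd m (k + 1) n (by omega)
  have hMk : 0 < M m k := M_pos m hm k
  have h1 : l * M m n + j = j + (l * (m k * c)) * M m k := by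
    rw [hc]; simp [M]; ring
  rw [digit, h1, Nat.add_mul_div_right _ _ hMk]
  have : j / M m k + l * (m k * c) = j / M m k + (l * c) * m k := by ring
  rw [this, Nat.add_mul_mod_self_right]
  rfl

lemma digit_mul_add_self (hm : ∀ k, 2 ≤ m k) {n l j : ℕ} (hl : l < m n)
    (hj : j < M m n) : digit m (l * M m n + j) n = l := by
  have hMn : 0 < M m n := M_pos m hm n
  rw [digit, mul_comm l (M m n), Nat.mul_add_div hMn, Nat.div_eq_of_lt hj]
  simpa using Nat.mod_eq_of_lt hl

lemma psi_eq_prod (hm : ∀ k, 2 ≤ m k) (N R : ℕ) (hR : N < R) (x : G m) :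
    psi m N x = ∏ k ∈ Finset.range R, rad m k x ^ digit m N k := by
  unfold psi
  apply Finset.prod_subset (Finset.range_subset_range.mpr (by omega))
  intro k hk hk'
  simp only [Finset.mem_range] at hk hk'
  have hNk : N < M m k := lt_of_le_of_lt (by omega) (lt_M m hm k)
  rw [digit_zero_of_lt m hNk, pow_zero]

lemma psi_mul (hm : ∀ k, 2 ≤ m k) {n l j : ℕ} (hl : l < m n) (hj : j < M m n)
    (x : G m) : psi m (l * M m n + j) x = rad m n x ^ l * psi m j x := by
  set R := n + 1 + (l * M m n + j) with hRdef
  have hn : n ∈ Finset.range R := by simp [hRdef]; omega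
  rw [psi_eq_prod m hm (l * M m n + j) R (by omega),
    psi_eq_prod m hm j R (by omega),
    ← Finset.mul_prod_erase _ _ hn, ← Finset.mul_prod_erase _ _ hn,
    digit_mul_add_self m hm hl hj, digit_zero_of_lt m hj, pow_zero, one_mul]
  congr 1
  apply Finset.prod_congr rfl
  intro k hk
  simp only [Finset.mem_erase, Finset.mem_range] at hk
  rcases Nat.lt_or_ge k n with h | h
  · rw [digit_mul_add_lt m hm h]
  · have hkn : n < k := lt_of_le_of_ne h (Ne.symm hk.1)
    have hML : M m (n + 1) ≤ M m k :=
      Nat.le_of_dvd (M_pos m hm k) (M_dvd m (n + 1) k hkn)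
    have hlt : l * M m n + j < M m (n + 1) := by
      have h1 : l * M m n + j < (l + 1) * M m n := by
        have := hj; rw [add_mul, one_mul]; omega
      have h2 : (l + 1) * M m n ≤ m n * M m n := Nat.mul_le_mul_right _ hl
      simp only [M]; omega
    rw [digit_zero_of_lt m (lt_of_lt_of_le hlt hML),
      digit_zero_of_lt m (lt_of_lt_of_le (lt_of_le_of_lt (Nat.le_add_left _ _) hlt) hML)]

lemma Dker_mul_add (hm : ∀ k, 2 ≤ m k) {n l j : ℕ} (hl : l < m n)
    (hj : j ≤ M m n) (x : G m) :
    Dker m (l * M m n + j) x = Dker m (l * M m n) x + rad m n x ^ l * Dker m j x := by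
  unfold Dker
  rw [Finset.sum_range_add, Finset.mul_sum]
  congr 1
  apply Finset.sum_congr rfl
  intro i hi
  simp only [Finset.mem_range] at hi
  exact psi_mul m hm hl (by omega) x

lemma Dker_mul (hm : ∀ k, 2 ≤ m k) {n l : ℕ} (hl : l ≤ m n) (x : G m) :
    Dker m (l * M m n) x = (∑ i ∈ Finset.range l, rad m n x ^ i) * Dker m (M m n) x := by
  induction l with
  | zero => simp [Dker]
  | succ l ih =>
    have hl' : l < m n := by omega
    have h1 : (l + 1) * M m n = l * M m n + M m n := by ring
    rw [h1, Dker_mul_add m hm hl' (le_refl _) x, ih (by omega),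
      Finset.sum_range_succ, add_mul]

lemma sum_range_mul_eq {β : Type*} [AddCommMonoid β] (f : ℕ → β) (a b : ℕ) :
    ∑ k ∈ Finset.range (a * b), f k =
      ∑ l ∈ Finset.range a, ∑ j ∈ Finset.range b, f (l * b + j) := by
  induction a with
  | zero => simp
  | succ a ih =>
    have h1 : (a + 1) * b = a * b + b := by ring
    rw [h1, Finset.sum_range_add, ih, Finset.sum_range_succ]

theorem statement17 (hm : ∀ k, 2 ≤ m k) (hbdd : ∃ B, ∀ k, m k ≤ B)
    (n s : ℕ) (hs1 : 1 ≤ s) (hs2 : s ≤ m n - 1) (x : G m) :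
    (s : ℂ) * (M m n : ℂ) * Kker m (s * M m n) x =
      (∑ l ∈ Finset.range s, ∑ i ∈ Finset.range l, rad m n x ^ i) * (M m n : ℂ) *
          Dker m (M m n) x +
        (∑ l ∈ Finset.range s, rad m n x ^ l) * (M m n : ℂ) * Kker m (M m n) x := by
  have hMn : (M m n : ℂ) ≠ 0 := Nat.cast_ne_zero.mpr (M_pos m hm n).ne'
  have hsC : (s : ℂ) ≠ 0 := Nat.cast_ne_zero.mpr (by omega)
  have hmn2 : 2 ≤ m n := hm n
  have key : ∑ k ∈ Finset.range (s * M m n), Dker m k x =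
      (∑ l ∈ Finset.range s, ∑ i ∈ Finset.range l, rad m n x ^ i) * (M m n : ℂ) *
        Dker m (M m n) x +
      (∑ l ∈ Finset.range s, rad m n x ^ l) *
        ∑ j ∈ Finset.range (M m n), Dker m j x := by
    rw [sum_range_mul_eq]
    have hinner : ∀ l ∈ Finset.range s,
        ∑ j ∈ Finset.range (M m n), Dker m (l * M m n + j) x =
        (∑ i ∈ Finset.range l, rad m n x ^ i) * (M m n : ℂ) * Dker m (M m n) x +
        rad m n x ^ l * ∑ j ∈ Finset.range (M m n), Dker m j x := by
      intro l hl
      simp only [Finset.mem_range] at hl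
      have hlm : l < m n := by omega
      have step : ∀ j ∈ Finset.range (M m n), Dker m (l * M m n + j) x =
          Dker m (l * M m n) x + rad m n x ^ l * Dker m j x := fun j hj =>
        Dker_mul_add m hm hlm (le_of_lt (Finset.mem_range.mp hj)) x
      rw [Finset.sum_congr rfl step, Finset.sum_add_distrib, Finset.sum_const,
        ← Finset.mul_sum, Dker_mul m hm (le_of_lt hlm) x]
      simp only [Finset.card_range, nsmul_eq_mul]
      ring
    rw [Finset.sum_congr rfl hinner, Finset.sum_add_distrib, ← Finset.sum_mul,
      ← Finset.sum_mul, ← Finset.sum_mul]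
  unfold Kker
  rw [key]
  push_cast
  field_simp

end Vilenkin
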